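/- For all real n ≥ 7, (1/(n-2)) · (((2-√2)/2)·n - 5/2 - 1/(6(n-2)) + √2)/(n - 5/2 - √2) · (2√((n-2)(2n-6)) - n + 4)/(n-2) · ((2-√2)/2 + √2/n) > ((8√2 - 11)/2)·(1/n + 7/n²). -/
import Mathlib

lemma aux_pos (p q a : ℝ) (ha : a^2 = 2) (ha0 : 0 < a) (hq : 0 < q)
    (h : p^2 < 2*q^2) : 0 < p + q*a := by
  nlinarith [mul_pos hq ha0, sq_nonneg (p + q*a), sq_nonneg (p - q*a)]

lemma sq_trick (K X : ℝ) (h : K^2 < X^2) (hX : 0 ≤ X) : K < X := by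
  nlinarith
set_option maxHeartbeats 4000000 in
theorem stmt_15 (n : ℝ) (hn : 7 ≤ n) :
    (1/(n-2)) * ((((2 - Real.sqrt 2)/2)*n - 5/2 - 1/(6*(n-2)) + Real.sqrt 2)/(n - 5/2 - Real.sqrt 2))
      * ((2*Real.sqrt ((n-2)*(2*n-6)) - n + 4)/(n-2))
      * ((2 - Real.sqrt 2)/2 + Real.sqrt 2/n)
    > ((8*Real.sqrt 2 - 11)/2) * (1/n + 7/n^2) := by
  set a := Real.sqrt 2 with ha_def
  have ha2 : a^2 = 2 := Real.sq_sqrt (by norm_num)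
  have ha0 : 0 < a := Real.sqrt_pos.mpr (by norm_num)
  have ha15 : a < 3/2 := by nlinarith
  have ha14 : 1.4 < a := by nlinarith
  have hn0 : (0:ℝ) < n := by linarith
  have hn2 : (0:ℝ) < n - 2 := by linarith
  have hn7 : (0:ℝ) ≤ n - 7 := by linarith
  have hD : (0:ℝ) < n - 5/2 - a := by linarith
  set b := Real.sqrt ((n-2)*(2*n-6)) with hb_def
  have hb0 : (0:ℝ) ≤ b := Real.sqrt_nonneg _
  have hb2 : b^2 = (n-2)*(2*n-6) := Real.sq_sqrt (by nlinarith)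
  have hApos : (0:ℝ) < (3*(2-a)*n*(n-2) - 15*(n-2) + 6*a*(n-2) - 1) := by nlinarith [mul_pos hn0 hn2, mul_nonneg hn7 hn2.le]
  have hEpos : (0:ℝ) < ((2-a)*n + 2*a) := by nlinarith
  have hXnn : (0:ℝ) ≤ 2*(3*(2-a)*n*(n-2) - 15*(n-2) + 6*a*(n-2) - 1)*((2-a)*n + 2*a)*n*b :=
    mul_nonneg (mul_nonneg (mul_nonneg (by linarith) hEpos.le) hn0.le) hb0
  have key : 4*(3*(2-a)*n*(n-2) - 15*(n-2) + 6*a*(n-2) - 1)^2*((2-a)*n + 2*a)^2*n^2*((n-2)*(2*n-6)) - (6*(8*a-11)*(n+7)*(n-2)^3*(n-5/2-a) + (n-4)*(3*(2-a)*n*(n-2) - 15*(n-2) + 6*a*(n-2) - 1)*((2-a)*n + 2*a)*n)^2 = ((-718129369776:ℝ) + (507858665440:ℝ)*a) + ((-1157623796504:ℝ) + (818676099248:ℝ)*a)*(n-7) + ((-825204103795:ℝ) + (583591672222:ℝ)*a)*(n-7)^2 + ((-341203846570:ℝ) + (241303012068:ℝ)*a)*(n-7)^3 + ((-90113465773:ℝ)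 + (63729026114:ℝ)*a)*(n-7)^4 + ((-15749447156:ℝ) + (11138045152:ℝ)*a)*(n-7)^5 + ((-1819311837:ℝ) + (1286601314:ℝ)*a)*(n-7)^6 + ((-133728474:ℝ) + (94569492:ℝ)*a)*(n-7)^7 + ((-5663475:ℝ) + (4004958:ℝ)*a)*(n-7)^8 + ((-104976:ℝ) + (74232:ℝ)*a)*(n-7)^9 := by
    linear_combination ((26078976:ℝ) + (-16257024:ℝ)*a + (-7225344:ℝ)*a^2 + (-72253440:ℝ)*n + (59243520:ℝ)*n*a + (19095552:ℝ)*n*a^2 + (70841600:ℝ)*n^2 + (-88658688:ℝ)*n^2*a + (-19427328:ℝ)*n^2*a^2 + (-17256064:ℝ)*n^3 + (68902656:ℝ)*n^3*a + (8607744:ℝ)*n^3*a^2 + (-19349908:ℝ)*n^4 + (-28061664:ℝ)*n^4*a + (-595008:ℝ)*n^4*a^2 + (16553244:ℝ)*n^5 + (4496160:ℝ)*n^5*a + (-892224:ℝ)*n^5*a^2 + (-4330397:ℝ)*n^6 + (494592:ℝ)*n^6*a + (316944:ℝ)*n^6*a^2 + (-190014:ℝ)*n^7 + (-163440:ℝ)*n^7*a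 + (-36576:ℝ)*n^7*a^2 + (297777:ℝ)*n^8 + (-42870:ℝ)*n^8*a + (2628:ℝ)*n^8*a^2 + (-44262:ℝ)*n^9 + (14346:ℝ)*n^9*a + (-756:ℝ)*n^9*a^2 + (882:ℝ)*n^10 + (-792:ℝ)*n^10*a + (63:ℝ)*n^10*a^2) * ha2
  have hc0 : (0:ℝ) < (-718129369776:ℝ) + (507858665440:ℝ)*a := aux_pos _ _ _ ha2 ha0 (by norm_num) (by norm_num)
  have hc1 : (0:ℝ) < (-1157623796504:ℝ) + (818676099248:ℝ)*a := aux_pos _ _ _ ha2 ha0 (by norm_num) (by norm_num)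
  have hc2 : (0:ℝ) < (-825204103795:ℝ) + (583591672222:ℝ)*a := aux_pos _ _ _ ha2 ha0 (by norm_num) (by norm_num)
  have hc3 : (0:ℝ) < (-341203846570:ℝ) + (241303012068:ℝ)*a := aux_pos _ _ _ ha2 ha0 (by norm_num) (by norm_num)
  have hc4 : (0:ℝ) < (-90113465773:ℝ) + (63729026114:ℝ)*a := aux_pos _ _ _ ha2 ha0 (by norm_num) (by norm_num)
  have hc5 : (0:ℝ) < (-15749447156:ℝ) + (11138045152:ℝ)*a := aux_pos _ _ _ ha2 ha0 (by norm_num) (by norm_num)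
  have hc6 : (0:ℝ) < (-1819311837:ℝ) + (1286601314:ℝ)*a := aux_pos _ _ _ ha2 ha0 (by norm_num) (by norm_num)
  have hc7 : (0:ℝ) < (-133728474:ℝ) + (94569492:ℝ)*a := aux_pos _ _ _ ha2 ha0 (by norm_num) (by norm_num)
  have hc8 : (0:ℝ) < (-5663475:ℝ) + (4004958:ℝ)*a := aux_pos _ _ _ ha2 ha0 (by norm_num) (by norm_num)
  have hc9 : (0:ℝ) < (-104976:ℝ) + (74232:ℝ)*a := aux_pos _ _ _ ha2 ha0 (by norm_num) (by norm_num)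
  have hS : (0:ℝ) < ((-718129369776:ℝ) + (507858665440:ℝ)*a) + ((-1157623796504:ℝ) + (818676099248:ℝ)*a)*(n-7) + ((-825204103795:ℝ) + (583591672222:ℝ)*a)*(n-7)^2 + ((-341203846570:ℝ) + (241303012068:ℝ)*a)*(n-7)^3 + ((-90113465773:ℝ) + (63729026114:ℝ)*a)*(n-7)^4 + ((-15749447156:ℝ) + (11138045152:ℝ)*a)*(n-7)^5 + ((-1819311837:ℝ) + (1286601314:ℝ)*a)*(n-7)^6 + ((-133728474:ℝ) + (94569492:ℝ)*a)*(n-7)^7 + ((-5663475:ℝ) + (4004958:ℝ)*a)*(n-7)^8 + ((-104976:ℝ) + (74232:ℝ)*a)*(n-7)^9 := by linarith [mul_nonneg hc1.le (pow_nonneg hn7 1), mul_nonneg hc2.le (pow_nonneg hn7 2), mul_nonneg hc3.le (pow_nonneg hn7 3), mul_nonneg hc4.le (pow_nonneg hn7 4), mul_nonneg hc5.le (pow_nonneg hn7 5), mul_nonneg hc6.le (pow_nonneg hn7 6), mul_nonneg hc7.le (pow_nonneg hn7 7), mul_nonneg hc8.le (pow_nonneg hn7 8), mul_nonneg hc9.le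 (pow_nonneg hn7 9)]
  have hKlt : (6*(8*a-11)*(n+7)*(n-2)^3*(n-5/2-a) + (n-4)*(3*(2-a)*n*(n-2) - 15*(n-2) + 6*a*(n-2) - 1)*((2-a)*n + 2*a)*n)^2 < 4*(3*(2-a)*n*(n-2) - 15*(n-2) + 6*a*(n-2) - 1)^2*((2-a)*n + 2*a)^2*n^2*((n-2)*(2*n-6)) := by linarith
  clear key hc0 hc1 hc2 hc3 hc4 hc5 hc6 hc7 hc8 hc9 hS
  have hsq : (6*(8*a-11)*(n+7)*(n-2)^3*(n-5/2-a) + (n-4)*(3*(2-a)*n*(n-2) - 15*(n-2) + 6*a*(n-2) - 1)*((2-a)*n + 2*a)*n)^2 < (2*(3*(2-a)*n*(n-2) - 15*(n-2) + 6*a*(n-2) - 1)*((2-a)*n + 2*a)*n*b)^2 := by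
    have hexp : (2*(3*(2-a)*n*(n-2) - 15*(n-2) + 6*a*(n-2) - 1)*((2-a)*n + 2*a)*n*b)^2 = 4*(3*(2-a)*n*(n-2) - 15*(n-2) + 6*a*(n-2) - 1)^2*((2-a)*n + 2*a)^2*n^2*b^2 := by ring
    rw [hexp, hb2]; exact hKlt
  have hmain : (6*(8*a-11)*(n+7)*(n-2)^3*(n-5/2-a) + (n-4)*(3*(2-a)*n*(n-2) - 15*(n-2) + 6*a*(n-2) - 1)*((2-a)*n + 2*a)*n) < 2*(3*(2-a)*n*(n-2) - 15*(n-2) + 6*a*(n-2) - 1)*((2-a)*n + 2*a)*n*b := sq_trick _ _ hsq hXnn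
  have hnum : (0:ℝ) < 2*(3*(2-a)*n*(n-2) - 15*(n-2) + 6*a*(n-2) - 1)*((2-a)*n + 2*a)*n*b - (6*(8*a-11)*(n+7)*(n-2)^3*(n-5/2-a) + (n-4)*(3*(2-a)*n*(n-2) - 15*(n-2) + 6*a*(n-2) - 1)*((2-a)*n + 2*a)*n) := by linarith
  have hden : (0:ℝ) < 12*n^2*(n-2)^3*(n-5/2-a) := by
    have h1 : (0:ℝ) < 12*n^2*(n-2)^3 := by positivity
    exact mul_pos h1 hD
  have hne1 : n ≠ 0 := ne_of_gt hn0
  have hne2 : n - 2 ≠ 0 := ne_of_gt hn2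
  have hne3 : n - 5/2 - a ≠ 0 := ne_of_gt hD
  have hmul : ((1/(n-2)) * ((((2 - a)/2)*n - 5/2 - 1/(6*(n-2)) + a)/(n - 5/2 - a)) * ((2*b - n + 4)/(n-2)) * ((2 - a)/2 + a/n) - ((8*a - 11)/2) * (1/n + 7/n^2)) * (12*n^2*(n-2)^3*(n-5/2-a)) = 2*(3*(2-a)*n*(n-2) - 15*(n-2) + 6*a*(n-2) - 1)*((2-a)*n + 2*a)*n*b - (6*(8*a-11)*(n+7)*(n-2)^3*(n-5/2-a) + (n-4)*(3*(2-a)*n*(n-2) - 15*(n-2) + 6*a*(n-2) - 1)*((2-a)*n + 2*a)*n) := by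
    have hu : (n-2) * (n-2)⁻¹ = 1 := mul_inv_cancel₀ hne2
    have hv : (n - 5/2 - a) * (n - 5/2 - a)⁻¹ = 1 := mul_inv_cancel₀ hne3
    have hw : n * n⁻¹ = 1 := mul_inv_cancel₀ hne1
    have hz : (6*(n-2)) * (6*(n-2))⁻¹ = 1 := mul_inv_cancel₀ (mul_ne_zero (by norm_num) hne2)
    linear_combination ((232:ℝ)*n^2 + (-464:ℝ)*n^2*(n-2)⁻¹ + (116:ℝ)*n^2*b + (-232:ℝ)*n^2*b*(n-2)⁻¹ + (-212:ℝ)*n^2*a + (232:ℝ)*n^2*a*n⁻¹ + (424:ℝ)*n^2*a*(n-2)⁻¹ + (-464:ℝ)*n^2*a*(n-2)⁻¹*n⁻¹ + (-106:ℝ)*n^2*a*b + (116:ℝ)*n^2*a*b*n⁻¹ + (212:ℝ)*n^2*a*b*(n-2)⁻¹ + (-232:ℝ)*n^2*a*b*(n-2)⁻¹*n⁻¹ + (48:ℝ)*n^2*a^2 + (-96:ℝ)*n^2*a^2*n⁻¹ + (-96:ℝ)*n^2*a^2*(n-2)⁻¹ + (192:ℝ)*n^2*a^2*(n-2)⁻¹*n⁻¹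 + (24:ℝ)*n^2*a^2*b + (-48:ℝ)*n^2*a^2*b*n⁻¹ + (-48:ℝ)*n^2*a^2*b*(n-2)⁻¹ + (96:ℝ)*n^2*a^2*b*(n-2)⁻¹*n⁻¹ + (-274:ℝ)*n^3 + (780:ℝ)*n^3*(n-2)⁻¹ + (-108:ℝ)*n^3*b + (332:ℝ)*n^3*b*(n-2)⁻¹ + (257:ℝ)*n^3*a + (-274:ℝ)*n^3*a*n⁻¹ + (-726:ℝ)*n^3*a*(n-2)⁻¹ + (780:ℝ)*n^3*a*(n-2)⁻¹*n⁻¹ + (102:ℝ)*n^3*a*b + (-108:ℝ)*n^3*a*b*n⁻¹ + (-310:ℝ)*n^3*a*b*(n-2)⁻¹ + (332:ℝ)*n^3*a*b*(n-2)⁻¹*n⁻¹ + (-60:ℝ)*n^3*a^2 + (120:ℝ)*n^3*a^2*n⁻¹ + (168:ℝ)*n^3*a^2*(n-2)⁻¹ + (-336:ℝ)*n^3*a^2*(n-2)⁻¹*n⁻¹ + (-24:ℝ)*n^3*a^2*b + (48:ℝ)*n^3*a^2*b*n⁻¹ + (72:ℝ)*n^3*a^2*b*(n-2)⁻¹ +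 (-144:ℝ)*n^3*a^2*b*(n-2)⁻¹*n⁻¹ + (102:ℝ)*n^4 + (-478:ℝ)*n^4*(n-2)⁻¹ + (24:ℝ)*n^4*b + (-156:ℝ)*n^4*b*(n-2)⁻¹ + (-99:ℝ)*n^4*a + (102:ℝ)*n^4*a*n⁻¹ + (455:ℝ)*n^4*a*(n-2)⁻¹ + (-478:ℝ)*n^4*a*(n-2)⁻¹*n⁻¹ + (-24:ℝ)*n^4*a*b + (24:ℝ)*n^4*a*b*n⁻¹ + (150:ℝ)*n^4*a*b*(n-2)⁻¹ + (-156:ℝ)*n^4*a*b*(n-2)⁻¹*n⁻¹ + (24:ℝ)*n^4*a^2 + (-48:ℝ)*n^4*a^2*n⁻¹ + (-108:ℝ)*n^4*a^2*(n-2)⁻¹ + (216:ℝ)*n^4*a^2*(n-2)⁻¹*n⁻¹ + (6:ℝ)*n^4*a^2*b + (-12:ℝ)*n^4*a^2*b*n⁻¹ + (-36:ℝ)*n^4*a^2*b*(n-2)⁻¹ + (72:ℝ)*n^4*a^2*b*(n-2)⁻¹*n⁻¹ + (-12:ℝ)*n^5 + (126:ℝ)*n^5*(n-2)⁻¹ +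 (24:ℝ)*n^5*b*(n-2)⁻¹ + (12:ℝ)*n^5*a + (-12:ℝ)*n^5*a*n⁻¹ + (-123:ℝ)*n^5*a*(n-2)⁻¹ + (126:ℝ)*n^5*a*(n-2)⁻¹*n⁻¹ + (-24:ℝ)*n^5*a*b*(n-2)⁻¹ + (24:ℝ)*n^5*a*b*(n-2)⁻¹*n⁻¹ + (-3:ℝ)*n^5*a^2 + (6:ℝ)*n^5*a^2*n⁻¹ + (30:ℝ)*n^5*a^2*(n-2)⁻¹ + (-60:ℝ)*n^5*a^2*(n-2)⁻¹*n⁻¹ + (6:ℝ)*n^5*a^2*b*(n-2)⁻¹ + (-12:ℝ)*n^5*a^2*b*(n-2)⁻¹*n⁻¹ + (-12:ℝ)*n^6*(n-2)⁻¹ + (12:ℝ)*n^6*a*(n-2)⁻¹ + (-12:ℝ)*n^6*a*(n-2)⁻¹*n⁻¹ + (-3:ℝ)*n^6*a^2*(n-2)⁻¹ + (6:ℝ)*n^6*a^2*(n-2)⁻¹*n⁻¹) * hu + ((928:ℝ)*n^2*(n-2)⁻¹^2 + (464:ℝ)*n^2*b*(n-2)⁻¹^2 + (-848:ℝ)*n^2*a*(n-2)⁻¹^2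 + (928:ℝ)*n^2*a*(n-2)⁻¹^2*n⁻¹ + (-424:ℝ)*n^2*a*b*(n-2)⁻¹^2 + (464:ℝ)*n^2*a*b*(n-2)⁻¹^2*n⁻¹ + (192:ℝ)*n^2*a^2*(n-2)⁻¹^2 + (-384:ℝ)*n^2*a^2*(n-2)⁻¹^2*n⁻¹ + (96:ℝ)*n^2*a^2*b*(n-2)⁻¹^2 + (-192:ℝ)*n^2*a^2*b*(n-2)⁻¹^2*n⁻¹ + (-2024:ℝ)*n^3*(n-2)⁻¹^2 + (-896:ℝ)*n^3*b*(n-2)⁻¹^2 + (1876:ℝ)*n^3*a*(n-2)⁻¹^2 + (-2024:ℝ)*n^3*a*(n-2)⁻¹^2*n⁻¹ + (832:ℝ)*n^3*a*b*(n-2)⁻¹^2 + (-896:ℝ)*n^3*a*b*(n-2)⁻¹^2*n⁻¹ + (-432:ℝ)*n^3*a^2*(n-2)⁻¹^2 + (864:ℝ)*n^3*a^2*(n-2)⁻¹^2*n⁻¹ + (-192:ℝ)*n^3*a^2*b*(n-2)⁻¹^2 + (384:ℝ)*n^3*a^2*b*(n-2)⁻¹^2*n⁻¹ + (1736:ℝ)*n^4*(n-2)⁻¹^2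 + (644:ℝ)*n^4*b*(n-2)⁻¹^2 + (-1636:ℝ)*n^4*a*(n-2)⁻¹^2 + (1736:ℝ)*n^4*a*(n-2)⁻¹^2*n⁻¹ + (-610:ℝ)*n^4*a*b*(n-2)⁻¹^2 + (644:ℝ)*n^4*a*b*(n-2)⁻¹^2*n⁻¹ + (384:ℝ)*n^4*a^2*(n-2)⁻¹^2 + (-768:ℝ)*n^4*a^2*(n-2)⁻¹^2*n⁻¹ + (144:ℝ)*n^4*a^2*b*(n-2)⁻¹^2 + (-288:ℝ)*n^4*a^2*b*(n-2)⁻¹^2*n⁻¹ + (-730:ℝ)*n^5*(n-2)⁻¹^2 + (-204:ℝ)*n^5*b*(n-2)⁻¹^2 + (701:ℝ)*n^5*a*(n-2)⁻¹^2 + (-730:ℝ)*n^5*a*(n-2)⁻¹^2*n⁻¹ + (198:ℝ)*n^5*a*b*(n-2)⁻¹^2 + (-204:ℝ)*n^5*a*b*(n-2)⁻¹^2*n⁻¹ + (-168:ℝ)*n^5*a^2*(n-2)⁻¹^2 + (336:ℝ)*n^5*a^2*(n-2)⁻¹^2*n⁻¹ + (-48:ℝ)*n^5*a^2*b*(n-2)⁻¹^2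 + (96:ℝ)*n^5*a^2*b*(n-2)⁻¹^2*n⁻¹ + (150:ℝ)*n^6*(n-2)⁻¹^2 + (24:ℝ)*n^6*b*(n-2)⁻¹^2 + (-147:ℝ)*n^6*a*(n-2)⁻¹^2 + (150:ℝ)*n^6*a*(n-2)⁻¹^2*n⁻¹ + (-24:ℝ)*n^6*a*b*(n-2)⁻¹^2 + (24:ℝ)*n^6*a*b*(n-2)⁻¹^2*n⁻¹ + (36:ℝ)*n^6*a^2*(n-2)⁻¹^2 + (-72:ℝ)*n^6*a^2*(n-2)⁻¹^2*n⁻¹ + (6:ℝ)*n^6*a^2*b*(n-2)⁻¹^2 + (-12:ℝ)*n^6*a^2*b*(n-2)⁻¹^2*n⁻¹ + (-12:ℝ)*n^7*(n-2)⁻¹^2 + (12:ℝ)*n^7*a*(n-2)⁻¹^2 + (-12:ℝ)*n^7*a*(n-2)⁻¹^2*n⁻¹ + (-3:ℝ)*n^7*a^2*(n-2)⁻¹^2 + (6:ℝ)*n^7*a^2*(n-2)⁻¹^2*n⁻¹) * hv + ((9240:ℝ) + (-3024:ℝ)*a + (-2688:ℝ)*a^2 + (-16236:ℝ)*n + (9240:ℝ)*n*n⁻¹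 + (7024:ℝ)*n*a + (-3024:ℝ)*n*a*n⁻¹ + (116:ℝ)*n*a*b + (3552:ℝ)*n*a^2 + (-2688:ℝ)*n*a^2*n⁻¹ + (-48:ℝ)*n*a^2*b + (9966:ℝ)*n^2 + (-17556:ℝ)*n^2*n⁻¹ + (-5542:ℝ)*n^2*a + (7224:ℝ)*n^2*a*n⁻¹ + (-108:ℝ)*n^2*a*b + (-1320:ℝ)*n^2*a^2 + (4032:ℝ)*n^2*a^2*n⁻¹ + (48:ℝ)*n^2*a^2*b + (-2145:ℝ)*n^3 + (12474:ℝ)*n^3*n⁻¹ + (1596:ℝ)*n^3*a + (-6300:ℝ)*n^3*a*n⁻¹ + (24:ℝ)*n^3*a*b + (-2016:ℝ)*n^3*a^2*n⁻¹ + (-12:ℝ)*n^3*a^2*b + (-99:ℝ)*n^4 + (-3927:ℝ)*n^4*n⁻¹ + (-6:ℝ)*n^4*a + (2394:ℝ)*n^4*a*n⁻¹ + (54:ℝ)*n^4*a^2 + (336:ℝ)*n^4*a^2*n⁻¹ + (66:ℝ)*n^5 + (462:ℝ)*n^5*n⁻¹ + (-48:ℝ)*n^5*a + (-336:ℝ)*n^5*a*n⁻¹)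 * hw + ((80:ℝ)*n^2*(n-2)⁻¹^2*(n-5/2-a)⁻¹ + (40:ℝ)*n^2*b*(n-2)⁻¹^2*(n-5/2-a)⁻¹ + (-8:ℝ)*n^2*a*(n-2)⁻¹^2*(n-5/2-a)⁻¹ + (80:ℝ)*n^2*a*(n-2)⁻¹^2*(n-5/2-a)⁻¹*n⁻¹ + (-4:ℝ)*n^2*a*b*(n-2)⁻¹^2*(n-5/2-a)⁻¹ + (40:ℝ)*n^2*a*b*(n-2)⁻¹^2*(n-5/2-a)⁻¹*n⁻¹ + (-16:ℝ)*n^2*a^2*(n-2)⁻¹^2*(n-5/2-a)⁻¹ + (32:ℝ)*n^2*a^2*(n-2)⁻¹^2*(n-5/2-a)⁻¹*n⁻¹ + (-8:ℝ)*n^2*a^2*b*(n-2)⁻¹^2*(n-5/2-a)⁻¹ + (16:ℝ)*n^2*a^2*b*(n-2)⁻¹^2*(n-5/2-a)⁻¹*n⁻¹ + (-132:ℝ)*n^3*(n-2)⁻¹^2*(n-5/2-a)⁻¹ + (-56:ℝ)*n^3*b*(n-2)⁻¹^2*(n-5/2-a)⁻¹ + (26:ℝ)*n^3*a*(n-2)⁻¹^2*(n-5/2-a)⁻¹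 + (-132:ℝ)*n^3*a*(n-2)⁻¹^2*(n-5/2-a)⁻¹*n⁻¹ + (12:ℝ)*n^3*a*b*(n-2)⁻¹^2*(n-5/2-a)⁻¹ + (-56:ℝ)*n^3*a*b*(n-2)⁻¹^2*(n-5/2-a)⁻¹*n⁻¹ + (20:ℝ)*n^3*a^2*(n-2)⁻¹^2*(n-5/2-a)⁻¹ + (-40:ℝ)*n^3*a^2*(n-2)⁻¹^2*(n-5/2-a)⁻¹*n⁻¹ + (8:ℝ)*n^3*a^2*b*(n-2)⁻¹^2*(n-5/2-a)⁻¹ + (-16:ℝ)*n^3*a^2*b*(n-2)⁻¹^2*(n-5/2-a)⁻¹*n⁻¹ + (80:ℝ)*n^4*(n-2)⁻¹^2*(n-5/2-a)⁻¹ + (26:ℝ)*n^4*b*(n-2)⁻¹^2*(n-5/2-a)⁻¹ + (-24:ℝ)*n^4*a*(n-2)⁻¹^2*(n-5/2-a)⁻¹ + (80:ℝ)*n^4*a*(n-2)⁻¹^2*(n-5/2-a)⁻¹*n⁻¹ + (-9:ℝ)*n^4*a*b*(n-2)⁻¹^2*(n-5/2-a)⁻¹ + (26:ℝ)*n^4*a*b*(n-2)⁻¹^2*(n-5/2-a)⁻¹*n⁻¹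 + (-8:ℝ)*n^4*a^2*(n-2)⁻¹^2*(n-5/2-a)⁻¹ + (16:ℝ)*n^4*a^2*(n-2)⁻¹^2*(n-5/2-a)⁻¹*n⁻¹ + (-2:ℝ)*n^4*a^2*b*(n-2)⁻¹^2*(n-5/2-a)⁻¹ + (4:ℝ)*n^4*a^2*b*(n-2)⁻¹^2*(n-5/2-a)⁻¹*n⁻¹ + (-21:ℝ)*n^5*(n-2)⁻¹^2*(n-5/2-a)⁻¹ + (-4:ℝ)*n^5*b*(n-2)⁻¹^2*(n-5/2-a)⁻¹ + (17/2:ℝ)*n^5*a*(n-2)⁻¹^2*(n-5/2-a)⁻¹ + (-21:ℝ)*n^5*a*(n-2)⁻¹^2*(n-5/2-a)⁻¹*n⁻¹ + (2:ℝ)*n^5*a*b*(n-2)⁻¹^2*(n-5/2-a)⁻¹ + (-4:ℝ)*n^5*a*b*(n-2)⁻¹^2*(n-5/2-a)⁻¹*n⁻¹ + (1:ℝ)*n^5*a^2*(n-2)⁻¹^2*(n-5/2-a)⁻¹ + (-2:ℝ)*n^5*a^2*(n-2)⁻¹^2*(n-5/2-a)⁻¹*n⁻¹ + (2:ℝ)*n^6*(n-2)⁻¹^2*(n-5/2-a)⁻¹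 + (-1:ℝ)*n^6*a*(n-2)⁻¹^2*(n-5/2-a)⁻¹ + (2:ℝ)*n^6*a*(n-2)⁻¹^2*(n-5/2-a)⁻¹*n⁻¹) * hz
  have hdenne : (12*n^2*(n-2)^3*(n-5/2-a)) ≠ 0 := ne_of_gt hden
  have hY : (0:ℝ) < ((1/(n-2)) * ((((2 - a)/2)*n - 5/2 - 1/(6*(n-2)) + a)/(n - 5/2 - a)) * ((2*b - n + 4)/(n-2)) * ((2 - a)/2 + a/n) - ((8*a - 11)/2) * (1/n + 7/n^2)) := by
    have h3 : ((1/(n-2)) * ((((2 - a)/2)*n - 5/2 - 1/(6*(n-2)) + a)/(n - 5/2 - a)) * ((2*b - n + 4)/(n-2)) * ((2 - a)/2 + a/n) - ((8*a - 11)/2) * (1/n + 7/n^2)) = ((1/(n-2)) * ((((2 - a)/2)*n - 5/2 - 1/(6*(n-2)) + a)/(n - 5/2 - a)) * ((2*b - n + 4)/(n-2)) * ((2 - a)/2 + a/n) - ((8*a - 11)/2) * (1/n + 7/n^2)) * (12*n^2*(n-2)^3*(n-5/2-a)) / (12*n^2*(n-2)^3*(n-5/2-a)) := by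
      rw [mul_div_assoc, div_self hdenne, mul_one]
    rw [h3, hmul]
    exact div_pos hnum hden
  rw [gt_iff_lt, ← sub_pos]
  linarith [hY]
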